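/- arXiv:2506.11516 — 2 statements merged into one kernel-verified Lean document; each statement's English description precedes it below -/
import Mathlib

section
/- Let W₀ be a real d_o × d_i matrix, let x₁, …, x_N ∈ ℝ^{d_i}, and for each i let ℓᵢ : ℝ^{d_o} → ℝ be a differentiable function (the loss ŷ ↦ 𝓛(yᵢ, ŷ) of the i-th training example). Define the training objective L̃(W) = Σ_{i=1}^N ℓᵢ(W xᵢ) on d_o × d_i matrices. Then: (a) the gradient of L̃ at W₀ with respect to the Frobenius inner product equals Σ_{i=1}^N (∇ℓᵢ(W₀ xᵢ)) xᵢᵀ; and (b) setting eᵢ := −η ∇ℓᵢ(W₀ xᵢ) and Ŵ := W₀ − η ∇L̃(W₀) for a learning rate η > 0, for every x_test ∈ ℝ^{d_i} one has Ŵ x_test = W₀ x_test + Σ_{i=1}^N eᵢ (xᵢᵀ x_test); that is, the prediction of the linear model after one gradient-descent step equals W₀ x_test plus the linear-attention output E(Xᵀ x_test), where E = [e₁, …, e_N] and X = [x₁, …, x_N]. -/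
open scoped BigOperators
open InnerProductSpace

/-- The output of the linear model with weight matrix `W` (given as an element of the
Euclidean space of `d_o × d_i` matrices, whose norm is the Frobenius norm) on input `v`. -/
noncomputable def linPred {d_o d_i : ℕ} (W : EuclideanSpace ℝ (Fin d_o × Fin d_i))
    (v : EuclideanSpace ℝ (Fin d_i)) : EuclideanSpace ℝ (Fin d_o) :=
  WithLp.toLp 2 (fun a => ∑ b, W (a, b) * v b)

/-- `W ↦ linPred W v` as a continuous linear map. -/
noncomputable def linPredCLM {d_o d_i : ℕ} (v : EuclideanSpace ℝ (Fin d_i)) :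
    EuclideanSpace ℝ (Fin d_o × Fin d_i) →L[ℝ] EuclideanSpace ℝ (Fin d_o) :=
  LinearMap.toContinuousLinearMap
  { toFun := fun W => linPred W v
    map_add' := by
      intro W₁ W₂
      ext a
      simp [linPred, add_mul, Finset.sum_add_distrib]
    map_smul' := by
      intro c W
      ext a
      simp [linPred, Finset.mul_sum, mul_assoc] }

lemma euclidean_sum_apply {ι α : Type*} [Fintype α] (s : Finset ι)
    (f : ι → EuclideanSpace ℝ α) (a : α) : (∑ i ∈ s, f i) a = ∑ i ∈ s, f i a := by
  induction s using Finset.cons_induction with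
  | empty => rfl
  | cons i s hi ih => rw [Finset.sum_cons, Finset.sum_cons, PiLp.add_apply, ih]

@[simp] lemma linPredCLM_apply {d_o d_i : ℕ} (v : EuclideanSpace ℝ (Fin d_i))
    (W : EuclideanSpace ℝ (Fin d_o × Fin d_i)) : linPredCLM (d_o := d_o) v W = linPred W v := rfl

/-- **Linear attention as one step of gradient descent.**
(a) The gradient (w.r.t. the Frobenius inner product) of the training objective
`L̃(W) = Σᵢ ℓᵢ(W xᵢ)` at `W₀` is `Σᵢ (∇ℓᵢ(W₀ xᵢ)) xᵢᵀ`; and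
(b) with `eᵢ := -η ∇ℓᵢ(W₀ xᵢ)` and `Ŵ := W₀ - η ∇L̃(W₀)`, for every test input
`Ŵ x_test = W₀ x_test + Σᵢ (xᵢᵀ x_test) eᵢ`, i.e. the one-step-updated prediction is the
initial prediction plus the linear-attention output with keys `xᵢ` and values `eᵢ`. -/
theorem linear_attention_as_gradient_descent
    (d_o d_i N : ℕ)
    (W₀ : EuclideanSpace ℝ (Fin d_o × Fin d_i))
    (x : Fin N → EuclideanSpace ℝ (Fin d_i))
    (ℓ : Fin N → EuclideanSpace ℝ (Fin d_o) → ℝ)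
    (hℓ : ∀ i, Differentiable ℝ (ℓ i))
    (Ltilde : EuclideanSpace ℝ (Fin d_o × Fin d_i) → ℝ)
    (hLtilde : ∀ W, Ltilde W = ∑ i, ℓ i (linPred W (x i)))
    (η : ℝ) (hη : 0 < η)
    (e : Fin N → EuclideanSpace ℝ (Fin d_o))
    (he : ∀ i, e i = (-η) • gradient (ℓ i) (linPred W₀ (x i)))
    (What : EuclideanSpace ℝ (Fin d_o × Fin d_i))
    (hWhat : What = W₀ - η • gradient Ltilde W₀) :
    (gradient Ltilde W₀
        = WithLp.toLp 2 (fun p : Fin d_o × Fin d_i => ∑ i, gradient (ℓ i) (linPred W₀ (x i)) p.1 * x i p.2)) ∧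
    (∀ xtest : EuclideanSpace ℝ (Fin d_i),
        linPred What xtest
          = linPred W₀ xtest + ∑ i, (∑ b, x i b * xtest b) • e i) := by
  set g : Fin N → EuclideanSpace ℝ (Fin d_o) := fun i => gradient (ℓ i) (linPred W₀ (x i)) with hg
  set G : EuclideanSpace ℝ (Fin d_o × Fin d_i) := WithLp.toLp 2 (fun p : Fin d_o × Fin d_i => ∑ i, g i p.1 * x i p.2) with hG
  have hgrad : gradient Ltilde W₀ = G := by
    have hGA : HasGradientAt Ltilde G W₀ := by
      rw [hasGradientAt_iff_hasFDerivAt]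
      have hfun : Ltilde = fun W => ∑ i, ℓ i (linPredCLM (x i) W) := by
        funext W; simpa using hLtilde W
      rw [hfun]
      have hcomp : ∀ i : Fin N, HasFDerivAt (fun W => ℓ i (linPredCLM (x i) W))
          ((toDual ℝ _ (g i)).comp (linPredCLM (x i))) W₀ := by
        intro i
        have h1 : HasGradientAt (ℓ i) (g i) (linPred W₀ (x i)) :=
          (hℓ i (linPred W₀ (x i))).hasGradientAt
        rw [hasGradientAt_iff_hasFDerivAt] at h1
        exact h1.comp W₀ (linPredCLM (x i)).hasFDerivAt
      have hsum := HasFDerivAt.fun_sum (fun i (_ : i ∈ Finset.univ) => hcomp i)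
      have hEq : toDual ℝ (EuclideanSpace ℝ (Fin d_o × Fin d_i)) G
          = ∑ i, (toDual ℝ _ (g i)).comp (linPredCLM (x i)) := by
        ext V
        simp only [ContinuousLinearMap.coe_sum', Finset.sum_apply,
          ContinuousLinearMap.comp_apply, toDual_apply_apply, linPredCLM_apply]
        simp only [PiLp.inner_apply, RCLike.inner_apply', conj_trivial, hG, linPred, PiLp.toLp_apply]
        rw [Fintype.sum_prod_type]
        calc ∑ a, ∑ b, (∑ i, g i a * x i b) * V (a, b)
            = ∑ a, ∑ i, ∑ b, g i a * x i b * V (a, b) := by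
              refine Finset.sum_congr rfl fun a _ => ?_
              rw [Finset.sum_comm]
              exact Finset.sum_congr rfl fun b _ => by rw [Finset.sum_mul]
          _ = ∑ i, ∑ a, ∑ b, g i a * x i b * V (a, b) := Finset.sum_comm
          _ = ∑ i, ∑ a, g i a * ∑ b, V (a, b) * x i b := by
              refine Finset.sum_congr rfl fun i _ => Finset.sum_congr rfl fun a _ => ?_
              rw [Finset.mul_sum]
              exact Finset.sum_congr rfl fun b _ => by ring
      rw [hEq]
      exact hsum
    exact hGA.gradient
  refine ⟨hgrad, ?_⟩
  intro xtest
  ext a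
  rw [hWhat, hgrad]
  simp only [linPred, euclidean_sum_apply, PiLp.add_apply, PiLp.sub_apply, PiLp.smul_apply,
    smul_eq_mul, he, hG, PiLp.toLp_apply]
  simp only [sub_mul, Finset.sum_sub_distrib, Finset.mul_sum, Finset.sum_mul]
  rw [sub_eq_add_neg]
  congr 1
  rw [← Finset.sum_neg_distrib, Finset.sum_comm]
  exact Finset.sum_congr rfl fun i _ => by
    rw [← Finset.sum_neg_distrib]
    exact Finset.sum_congr rfl fun b _ => by simp only [hg, linPred]; ring
end

section
/- (Talagrand's contraction lemma.) Fix a sample x₁, …, x_m ∈ 𝒳 and a nonempty class 𝓕 of functions 𝒳 → ℝ that is uniformly bounded on the sample (there is K with |f(xᵢ)| ≤ K for all f ∈ 𝓕 and all i). Let ψ : ℝ → ℝ satisfy ψ(0) = 0 and |ψ(a) − ψ(b)| ≤ L|a − b| for all a, b ∈ ℝ. Then 𝔼_σ[ sup_{f ∈ 𝓕} (1/m) Σ_{i=1}^m σᵢ ψ(f(xᵢ)) ] ≤ L · 𝔼_σ[ sup_{f ∈ 𝓕} (1/m) Σ_{i=1}^m σᵢ f(xᵢ) ], where σ = (σ₁,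 …, σ_m) is distributed uniformly on {−1, +1}^m. -/
open scoped BigOperators

/-- The ±1 sign associated to a Boolean: uniform `σ : Fin m → Bool` encodes a uniform
Rademacher vector `σ : {−1,+1}^m`. -/
noncomputable def radSign (b : Bool) : ℝ := if b then 1 else -1

lemma radSign_abs (b : Bool) : |radSign b| = 1 := by cases b <;> simp [radSign]

lemma radSign_not (b : Bool) : radSign (!b) = - radSign b := by cases b <;> simp [radSign]

/-- Core two-point inequality. -/
lemma core_ineq {ι : Type*} [Nonempty ι] (A b : ι → ℝ) (ψ : ℝ → ℝ) (L : ℝ)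
    (hψ : ∀ a c : ℝ, |ψ a - ψ c| ≤ L * |a - c|)
    (h3 : BddAbove (Set.range fun i => A i + L * b i))
    (h4 : BddAbove (Set.range fun i => A i - L * b i)) :
    (⨆ i, A i + ψ (b i)) + (⨆ i, A i - ψ (b i)) ≤
      (⨆ i, A i + L * b i) + (⨆ i, A i - L * b i) := by
  have key : ∀ i j, (A i + ψ (b i)) + (A j - ψ (b j)) ≤
      (⨆ i, A i + L * b i) + (⨆ i, A i - L * b i) := by
    intro i j
    have hij := hψ (b i) (b j)
    have habs : ψ (b i) - ψ (b j) ≤ L * |b i - b j| :=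
      le_trans (le_abs_self _) hij
    rcases le_total (b j) (b i) with h | h
    · have h1' := le_ciSup h3 i
      have h2' := le_ciSup h4 j
      rw [abs_of_nonneg (by linarith)] at habs
      linarith
    · have h1' := le_ciSup h3 j
      have h2' := le_ciSup h4 i
      rw [abs_of_nonpos (by linarith)] at habs
      linarith
  have h5 : (⨆ i, A i + ψ (b i)) ≤
      ((⨆ i, A i + L * b i) + (⨆ i, A i - L * b i)) - (⨆ j, A j - ψ (b j)) := by
    apply ciSup_le; intro i
    rw [le_sub_comm]
    apply ciSup_le; intro j
    rw [le_sub_iff_add_le]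
    linarith [key i j]
  linarith

section Swap
variable {𝒳 : Type*} {m : ℕ} (x : Fin m → 𝒳) (F : Set (𝒳 → ℝ))

lemma swap_step [Nonempty F]
    (φ₁ φ₂ : Fin m → ℝ → ℝ) (k : Fin m)
    (hagree : ∀ i, i ≠ k → φ₁ i = φ₂ i)
    (ψ : ℝ → ℝ) (L : ℝ) (hψ : ∀ a b : ℝ, |ψ a - ψ b| ≤ L * |a - b|)
    (hk1 : φ₁ k = ψ) (hk2 : φ₂ k = fun t => L * t)
    (B : ℝ)
    (hB1 : ∀ i (f : F), |φ₁ i ((f : 𝒳 → ℝ) (x i))| ≤ B)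
    (hB2 : ∀ i (f : F), |φ₂ i ((f : 𝒳 → ℝ) (x i))| ≤ B) :
    ∑ σ : Fin m → Bool, ⨆ f : F, ∑ i, radSign (σ i) * φ₁ i ((f : 𝒳 → ℝ) (x i)) ≤
    ∑ σ : Fin m → Bool, ⨆ f : F, ∑ i, radSign (σ i) * φ₂ i ((f : 𝒳 → ℝ) (x i)) := by
  set g₁ : (Fin m → Bool) → ℝ :=
    fun σ => ⨆ f : F, ∑ i, radSign (σ i) * φ₁ i ((f : 𝒳 → ℝ) (x i)) with hg₁
  set g₂ : (Fin m → Bool) → ℝ :=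
    fun σ => ⨆ f : F, ∑ i, radSign (σ i) * φ₂ i ((f : 𝒳 → ℝ) (x i)) with hg₂
  have hinv : Function.Involutive (fun σ : Fin m → Bool => Function.update σ k (!(σ k))) := by
    intro σ; funext i
    rcases eq_or_ne i k with rfl | h
    · simp [Function.update_self]
    · simp [Function.update_of_ne h]
  set e := hinv.toPerm with he
  have he1 : ∀ σ, (e σ : Fin m → Bool) k = !(σ k) := by
    intro σ; simp [he, Function.Involutive.toPerm, Function.update_self]
  have he2 : ∀ σ i, i ≠ k → (e σ : Fin m → Bool) i = σ i := by
    intro σ i h; simp [he, Function.Involutive.toPerm, Function.update_of_ne h]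
  -- pointwise paired inequality
  have hpt : ∀ σ, g₁ σ + g₁ (e σ) ≤ g₂ σ + g₂ (e σ) := by
    intro σ
    set A : F → ℝ :=
      fun f => ∑ i ∈ Finset.univ.erase k, radSign (σ i) * φ₁ i ((f : 𝒳 → ℝ) (x i)) with hA
    set b : F → ℝ := fun f => (f : 𝒳 → ℝ) (x k) with hb
    have hAe : ∀ (φ : Fin m → ℝ → ℝ) (τ : Fin m → Bool) (f : F),
        (∀ i, i ≠ k → φ i = φ₁ i) → (∀ i, i ≠ k → τ i = σ i) →
        (∑ i, radSign (τ i) * φ i ((f : 𝒳 → ℝ) (x i)))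
          = A f + radSign (τ k) * φ k (b f) := by
      intro φ τ f hφ hτ
      rw [← Finset.sum_erase_add Finset.univ _ (Finset.mem_univ k)]
      congr 1
      apply Finset.sum_congr rfl
      intro i hi
      have hik : i ≠ k := (Finset.mem_erase.1 hi).1
      rw [hφ i hik, hτ i hik]
    -- rewrite the four sups
    have h1 : g₁ σ = ⨆ f : F, A f + radSign (σ k) * ψ (b f) := by
      apply iSup_congr; intro f
      rw [hAe φ₁ σ f (fun _ _ => rfl) (fun _ _ => rfl), hk1]
    have h2 : g₁ (e σ) = ⨆ f : F, A f + (- radSign (σ k)) * ψ (b f) := by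
      apply iSup_congr; intro f
      rw [hAe φ₁ (e σ) f (fun _ _ => rfl) (fun i h => he2 σ i h), hk1, he1, radSign_not]
    have h3 : g₂ σ = ⨆ f : F, A f + radSign (σ k) * (L * b f) := by
      apply iSup_congr; intro f
      rw [hAe φ₂ σ f (fun i h => (hagree i h).symm) (fun _ _ => rfl), hk2]
    have h4 : g₂ (e σ) = ⨆ f : F, A f + (- radSign (σ k)) * (L * b f) := by
      apply iSup_congr; intro f
      rw [hAe φ₂ (e σ) f (fun i h => (hagree i h).symm) (fun i h => he2 σ i h), hk2, he1,
        radSign_not]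
    -- BddAbove helper
    have habove : ∀ (c : ℝ) (v : F → ℝ), |c| = 1 → (∀ f, |v f| ≤ B) →
        BddAbove (Set.range fun f : F => A f + c * v f) := by
      intro c v hc hv
      refine ⟨((Finset.univ.erase k).card : ℝ) * B + B, ?_⟩
      rintro _ ⟨f, rfl⟩
      have hA1 : A f ≤ ((Finset.univ.erase k).card : ℝ) * B := by
        rw [hA]
        calc (∑ i ∈ Finset.univ.erase k, radSign (σ i) * φ₁ i ((f : 𝒳 → ℝ) (x i)))
            ≤ ∑ _i ∈ Finset.univ.erase k, B := by
              apply Finset.sum_le_sum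
              intro i _
              calc radSign (σ i) * φ₁ i ((f : 𝒳 → ℝ) (x i))
                  ≤ |radSign (σ i) * φ₁ i ((f : 𝒳 → ℝ) (x i))| := le_abs_self _
                _ = |φ₁ i ((f : 𝒳 → ℝ) (x i))| := by rw [abs_mul, radSign_abs, one_mul]
                _ ≤ B := hB1 i f
          _ = ((Finset.univ.erase k).card : ℝ) * B := by
              rw [Finset.sum_const, nsmul_eq_mul]
      have hcv : c * v f ≤ B := by
        calc c * v f ≤ |c * v f| := le_abs_self _
          _ = |v f| := by rw [abs_mul, hc, one_mul]
          _ ≤ B := hv f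
      simpa using add_le_add hA1 hcv
    have hvψ : ∀ f : F, |ψ (b f)| ≤ B := by
      intro f; have := hB1 k f; rwa [hk1] at this
    have hvL : ∀ f : F, |L * b f| ≤ B := by
      intro f; have := hB2 k f; rwa [hk2] at this
    have hb3 : BddAbove (Set.range fun f : F => A f + L * b f) := by
      have := habove 1 (fun f => L * b f) (by norm_num) hvL
      simpa using this
    have hb4 : BddAbove (Set.range fun f : F => A f - L * b f) := by
      have := habove (-1) (fun f => L * b f) (by norm_num) hvL
      have heq : (fun f : F => A f + (-1) * (L * b f)) = fun f : F => A f - L * b f := by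
        funext f; ring
      rwa [heq] at this
    have hcore := core_ineq A b ψ L hψ hb3 hb4
    rw [h1, h2, h3, h4]
    have hs : radSign (σ k) = 1 ∨ radSign (σ k) = -1 := by
      cases σ k <;> simp [radSign]
    rcases hs with hs | hs <;> rw [hs]
    · have e1 : (⨆ f : F, A f + 1 * ψ (b f)) = ⨆ f : F, A f + ψ (b f) :=
        iSup_congr fun f => by ring
      have e2 : (⨆ f : F, A f + (-(1:ℝ)) * ψ (b f)) = ⨆ f : F, A f - ψ (b f) :=
        iSup_congr fun f => by ring
      have e3 : (⨆ f : F, A f + 1 * (L * b f)) = ⨆ f : F, A f + L * b f :=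
        iSup_congr fun f => by ring
      have e4 : (⨆ f : F, A f + (-(1:ℝ)) * (L * b f)) = ⨆ f : F, A f - L * b f :=
        iSup_congr fun f => by ring
      rw [e1, e2, e3, e4]; exact hcore
    · have e1 : (⨆ f : F, A f + (-1:ℝ) * ψ (b f)) = ⨆ f : F, A f - ψ (b f) :=
        iSup_congr fun f => by ring
      have e2 : (⨆ f : F, A f + (-(-1:ℝ)) * ψ (b f)) = ⨆ f : F, A f + ψ (b f) :=
        iSup_congr fun f => by ring
      have e3 : (⨆ f : F, A f + (-1:ℝ) * (L * b f)) = ⨆ f : F, A f - L * b f :=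
        iSup_congr fun f => by ring
      have e4 : (⨆ f : F, A f + (-(-1:ℝ)) * (L * b f)) = ⨆ f : F, A f + L * b f :=
        iSup_congr fun f => by ring
      rw [e1, e2, e3, e4]; linarith
  have hsum : ∑ σ : Fin m → Bool, (g₁ σ + g₁ (e σ)) ≤ ∑ σ : Fin m → Bool, (g₂ σ + g₂ (e σ)) :=
    Finset.sum_le_sum (fun σ _ => hpt σ)
  rw [Finset.sum_add_distrib, Finset.sum_add_distrib] at hsum
  have hc1 : ∑ σ : Fin m → Bool, g₁ (e σ) = ∑ σ : Fin m → Bool, g₁ σ := Equiv.sum_comp e g₁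
  have hc2 : ∑ σ : Fin m → Bool, g₂ (e σ) = ∑ σ : Fin m → Bool, g₂ σ := Equiv.sum_comp e g₂
  rw [hc1, hc2] at hsum
  linarith

end Swap

noncomputable def contrPhi (ψ : ℝ → ℝ) (L : ℝ) {m : ℕ} (k : ℕ) (i : Fin m) : ℝ → ℝ :=
  if (i : ℕ) < k then (fun t => L * t) else ψ

/-- The key unnormalized inequality. -/
lemma talagrand_key {𝒳 : Type*} {m : ℕ} (x : Fin m → 𝒳)
    (F : Set (𝒳 → ℝ)) [Nonempty F]
    (K : ℝ) (hK : ∀ f : F, ∀ i, |(f : 𝒳 → ℝ) (x i)| ≤ K)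
    (ψ : ℝ → ℝ) (L : ℝ)
    (hψ0 : ψ 0 = 0)
    (hψ : ∀ a b : ℝ, |ψ a - ψ b| ≤ L * |a - b|) :
    ∑ σ : Fin m → Bool, ⨆ f : F, ∑ i, radSign (σ i) * ψ ((f : 𝒳 → ℝ) (x i)) ≤
      L * ∑ σ : Fin m → Bool, ⨆ f : F, ∑ i, radSign (σ i) * (f : 𝒳 → ℝ) (x i) := by
  have hL : 0 ≤ L := by
    have := hψ 1 0
    have h0 : (0:ℝ) ≤ |ψ 1 - ψ 0| := abs_nonneg _
    simp only [sub_zero, abs_one, mul_one] at this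
    linarith
  set T : ℕ → ℝ := fun k =>
    ∑ σ : Fin m → Bool, ⨆ f : F, ∑ i, radSign (σ i) * contrPhi ψ L k i ((f : 𝒳 → ℝ) (x i))
    with hT
  have hBψ : ∀ (t : ℝ), |t| ≤ K → |ψ t| ≤ L * K := by
    intro t ht
    have h1 : |ψ t - ψ 0| ≤ L * |t - 0| := hψ t 0
    rw [hψ0, sub_zero, sub_zero] at h1
    exact h1.trans (mul_le_mul_of_nonneg_left ht hL)
  have hBL : ∀ (t : ℝ), |t| ≤ K → |L * t| ≤ L * K := by
    intro t ht
    rw [abs_mul, abs_of_nonneg hL]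
    exact mul_le_mul_of_nonneg_left ht hL
  have hB : ∀ (k : ℕ) (i : Fin m) (f : F), |contrPhi ψ L k i ((f : 𝒳 → ℝ) (x i))| ≤ L * K := by
    intro k i f
    unfold contrPhi
    by_cases h : (i : ℕ) < k
    · rw [if_pos h]; exact hBL _ (hK f i)
    · rw [if_neg h]; exact hBψ _ (hK f i)
  have hstep : ∀ k, k < m → T k ≤ T (k + 1) := by
    intro k hk
    refine swap_step x F (contrPhi ψ L k) (contrPhi ψ L (k+1)) ⟨k, hk⟩ ?_ ψ L hψ ?_ ?_
      (L * K) (hB k) (hB (k+1))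
    · intro i hi
      have hik : (i : ℕ) ≠ k := fun h => hi (Fin.ext h)
      unfold contrPhi
      rcases lt_or_ge (i : ℕ) k with h | h
      · rw [if_pos h, if_pos (by omega)]
      · rw [if_neg (by omega), if_neg (by omega)]
    · unfold contrPhi; rw [if_neg (by simp)]
    · unfold contrPhi; rw [if_pos (by simp)]
  have hchain : ∀ k, k ≤ m → T 0 ≤ T k := by
    intro k
    induction k with
    | zero => intro _; exact le_refl _
    | succ n ih => intro h; exact le_trans (ih (by omega)) (hstep n (by omega))
  have h0 : T 0 = ∑ σ : Fin m → Bool, ⨆ f : F, ∑ i, radSign (σ i) * ψ ((f : 𝒳 → ℝ) (x i)) := by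
    rw [hT]
    apply Finset.sum_congr rfl
    intro σ _
    apply iSup_congr
    intro f
    apply Finset.sum_congr rfl
    intro i _
    unfold contrPhi
    rw [if_neg (Nat.not_lt_zero _)]
  have hm : T m = L * ∑ σ : Fin m → Bool, ⨆ f : F, ∑ i, radSign (σ i) * (f : 𝒳 → ℝ) (x i) := by
    rw [hT, Finset.mul_sum]
    apply Finset.sum_congr rfl
    intro σ _
    rw [Real.mul_iSup_of_nonneg hL]
    apply iSup_congr
    intro f
    rw [Finset.mul_sum]
    apply Finset.sum_congr rfl
    intro i _
    unfold contrPhi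
    rw [if_pos i.isLt]
    ring
  calc ∑ σ : Fin m → Bool, ⨆ f : F, ∑ i, radSign (σ i) * ψ ((f : 𝒳 → ℝ) (x i))
      = T 0 := h0.symm
    _ ≤ T m := hchain m (le_refl m)
    _ = _ := hm

/-- **Talagrand's contraction lemma** (empirical Rademacher complexity version).
For a fixed sample `x₁, …, x_m`, a nonempty uniformly bounded class `𝓕` of real-valued
functions, and `ψ : ℝ → ℝ` with `ψ 0 = 0` that is `L`-Lipschitz,
`𝔼_σ[ sup_{f∈𝓕} (1/m) Σᵢ σᵢ ψ(f(xᵢ)) ] ≤ L · 𝔼_σ[ sup_{f∈𝓕} (1/m) Σᵢ σᵢ f(xᵢ) ]`,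
the expectation being over `σ` uniform on `{−1,+1}^m`. -/
theorem talagrand_contraction {𝒳 : Type*} (m : ℕ) (x : Fin m → 𝒳)
    (F : Set (𝒳 → ℝ)) (hFne : F.Nonempty)
    (K : ℝ) (hK : ∀ f ∈ F, ∀ i, |f (x i)| ≤ K)
    (ψ : ℝ → ℝ) (L : ℝ)
    (hψ0 : ψ 0 = 0)
    (hψ : ∀ a b : ℝ, |ψ a - ψ b| ≤ L * |a - b|) :
    (1 / 2 ^ m : ℝ) * ∑ σ : Fin m → Bool,
        (⨆ f : F, (1 / (m : ℝ)) * ∑ i, radSign (σ i) * ψ ((f : 𝒳 → ℝ) (x i)))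
      ≤ L * ((1 / 2 ^ m : ℝ) * ∑ σ : Fin m → Bool,
        (⨆ f : F, (1 / (m : ℝ)) * ∑ i, radSign (σ i) * (f : 𝒳 → ℝ) (x i))) := by
  haveI : Nonempty F := hFne.to_subtype
  have hm : (0:ℝ) ≤ 1 / (m : ℝ) := by positivity
  have key := talagrand_key x F K (fun f i => hK f f.2 i) ψ L hψ0 hψ
  have eL : ∀ σ : Fin m → Bool,
      (⨆ f : F, (1 / (m : ℝ)) * ∑ i, radSign (σ i) * ψ ((f : 𝒳 → ℝ) (x i)))
        = (1 / (m : ℝ)) * ⨆ f : F, ∑ i, radSign (σ i) * ψ ((f : 𝒳 → ℝ) (x i)) :=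
    fun σ => (Real.mul_iSup_of_nonneg hm _).symm
  have eR : ∀ σ : Fin m → Bool,
      (⨆ f : F, (1 / (m : ℝ)) * ∑ i, radSign (σ i) * (f : 𝒳 → ℝ) (x i))
        = (1 / (m : ℝ)) * ⨆ f : F, ∑ i, radSign (σ i) * (f : 𝒳 → ℝ) (x i) :=
    fun σ => (Real.mul_iSup_of_nonneg hm _).symm
  simp only [eL, eR]
  rw [← Finset.mul_sum, ← Finset.mul_sum]
  have hc : (0:ℝ) ≤ (1 / 2 ^ m : ℝ) * (1 / (m : ℝ)) := by positivity
  calc (1 / 2 ^ m : ℝ) * ((1 / (m : ℝ)) *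
        ∑ σ : Fin m → Bool, ⨆ f : F, ∑ i, radSign (σ i) * ψ ((f : 𝒳 → ℝ) (x i)))
      = ((1 / 2 ^ m : ℝ) * (1 / (m : ℝ))) *
        ∑ σ : Fin m → Bool, ⨆ f : F, ∑ i, radSign (σ i) * ψ ((f : 𝒳 → ℝ) (x i)) := by ring
    _ ≤ ((1 / 2 ^ m : ℝ) * (1 / (m : ℝ))) *
        (L * ∑ σ : Fin m → Bool, ⨆ f : F, ∑ i, radSign (σ i) * (f : 𝒳 → ℝ) (x i)) :=
        mul_le_mul_of_nonneg_left key hc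
    _ = L * ((1 / 2 ^ m : ℝ) * ((1 / (m : ℝ)) *
        ∑ σ : Fin m → Bool, ⨆ f : F, ∑ i, radSign (σ i) * (f : 𝒳 → ℝ) (x i))) := by ring
end
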